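/- Let N ≥ 2 be an integer and let p, q be coprime positive odd integers, each coprime to N. Define f_s = sin(πps/N) · sin(πqs/N) for integers s. Then there exist s, s' ∈ {1, …, N−1} with f_s > 0 and f_{s'} < 0 if and only if neither q − p nor q + p is divisible by 2N. -/

import Mathlib

open Real Finset

lemma cos_sum_zero (N : ℕ) (hN : 0 < N) (m : ℤ) (hm : ¬ (2*(N:ℤ)) ∣ m) :
    ∑ s ∈ Finset.range (2*N), Real.cos (π * m * s / N) = 0 := by
  have hN0 : (N:ℂ) ≠ 0 := by exact_mod_cast hN.ne'
  have hπ : (π:ℂ) ≠ 0 := by exact_mod_cast Real.pi_ne_zero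
  set z : ℂ := Complex.exp (π * m * Complex.I / N) with hz
  have hz1 : z ≠ 1 := by
    rw [hz, ne_eq, Complex.exp_eq_one_iff]
    rintro ⟨n, hn⟩
    apply hm
    refine ⟨n, ?_⟩
    have key : (m:ℂ) * (π * Complex.I) = ((2*N*n : ℤ) :ℂ) * (π * Complex.I) := by
      push_cast
      field_simp at hn
      linear_combination (π * Complex.I) * hn
    have := mul_right_cancel₀ (mul_ne_zero hπ Complex.I_ne_zero) key
    exact_mod_cast this
  have hz2N : z ^ (2*N) = 1 := by
    rw [hz, ← Complex.exp_nat_mul]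
    have : (2*N : ℕ) * ((π:ℂ) * m * Complex.I / N) = m * (2 * π * Complex.I) := by
      push_cast; field_simp
    rw [this, Complex.exp_int_mul_two_pi_mul_I]
  have hsum : ∑ s ∈ Finset.range (2*N), z ^ s = 0 := by
    rw [geom_sum_eq hz1, hz2N, sub_self, zero_div]
  have hre : ∀ s : ℕ, (z ^ s).re = Real.cos (π * m * s / N) := by
    intro s
    rw [hz, ← Complex.exp_nat_mul]
    have : (s:ℂ) * ((π:ℂ) * m * Complex.I / N) = ((π * m * s / N : ℝ) : ℂ) * Complex.I := by
      push_cast; field_simp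
    rw [this, Complex.exp_ofReal_mul_I_re]
  calc ∑ s ∈ Finset.range (2*N), Real.cos (π * m * s / N)
      = (∑ s ∈ Finset.range (2*N), z ^ s).re := by
        rw [Complex.re_sum]; exact Finset.sum_congr rfl fun s _ => (hre s).symm
    _ = 0 := by rw [hsum]; rfl

lemma prod_to_sum (N p q s : ℕ) (hN : 0 < N) :
    Real.sin (π * p * s / N) * Real.sin (π * q * s / N)
      = (Real.cos (π * (((q:ℤ) - p : ℤ) : ℝ) * s / N)
          - Real.cos (π * (((q:ℤ) + p : ℤ) : ℝ) * s / N)) / 2 := by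
  have hN0 : (N:ℝ) ≠ 0 := by exact_mod_cast hN.ne'
  have h := Real.cos_sub_cos (π * (((q:ℤ) - p : ℤ) : ℝ) * s / N)
      (π * (((q:ℤ) + p : ℤ) : ℝ) * s / N)
  have e1 : (π * (((q:ℤ) - p : ℤ) : ℝ) * s / N + π * (((q:ℤ) + p : ℤ) : ℝ) * s / N) / 2
      = π * q * s / N := by push_cast; field_simp; ring
  have e2 : (π * (((q:ℤ) - p : ℤ) : ℝ) * s / N - π * (((q:ℤ) + p : ℤ) : ℝ) * s / N) / 2
      = -(π * p * s / N) := by push_cast; field_simp; ring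
  rw [e1, e2, Real.sin_neg] at h
  linarith [h]

lemma f_shift (N p q s : ℕ) (hN : 0 < N) (hpodd : Odd p) (hqodd : Odd q) :
    Real.sin (π * p * (N + s) / N) * Real.sin (π * q * (N + s) / N)
      = Real.sin (π * p * s / N) * Real.sin (π * q * s / N) := by
  have hN0 : (N:ℝ) ≠ 0 := by exact_mod_cast hN.ne'
  have key : ∀ r : ℕ, Odd r → Real.sin (π * r * (N + s) / N) = - Real.sin (π * r * s / N) := by
    rintro r ⟨k, hk⟩
    have e : π * r * (N + s) / N = (π * r * s / N + π) + k * (2 * π) := by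
      push_cast [hk]; field_simp; ring
    rw [e]
    rw [Real.sin_add_nat_mul_two_pi (π * ↑r * ↑s / ↑N + π) k]
    exact Real.sin_add_pi _
  rw [key p hpodd, key q hqodd]
  ring

lemma sin_ne_zero_aux (N r s : ℕ) (hN : 0 < N) (hrN : Nat.Coprime r N)
    (hs1 : 1 ≤ s) (hs2 : s ≤ N - 1) :
    Real.sin (π * r * s / N) ≠ 0 := by
  have hN0 : (N:ℝ) ≠ 0 := by exact_mod_cast hN.ne'
  intro h
  rw [Real.sin_eq_zero_iff] at h
  obtain ⟨n, hn⟩ := h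
  have hπ : (π:ℝ) ≠ 0 := Real.pi_ne_zero
  have : (n:ℝ) * N = r * s := by
    field_simp at hn
    linarith
  have hcast : (n * N : ℤ) = (r * s : ℕ) := by exact_mod_cast this
  have hdvd : (N:ℤ) ∣ ((r * s : ℕ) : ℤ) := ⟨n, by linarith [hcast]⟩
  have hdvdn : N ∣ r * s := by exact_mod_cast hdvd
  have hNs : N ∣ s := (Nat.Coprime.dvd_of_dvd_mul_left (Nat.coprime_comm.mp hrN) hdvdn)
  have := Nat.le_of_dvd (by omega) hNs
  omega

lemma sum_icc_zero (N p q : ℕ) (hN : 2 ≤ N) (hpodd : Odd p) (hqodd : Odd q)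
    (h1 : ¬ ((2 * (N : ℤ)) ∣ ((q : ℤ) - (p : ℤ))))
    (h2 : ¬ ((2 * (N : ℤ)) ∣ ((q : ℤ) + (p : ℤ)))) :
    ∑ s ∈ Finset.Icc 1 (N-1), Real.sin (π * p * s / N) * Real.sin (π * q * s / N) = 0 := by
  have hN0 : 0 < N := by omega
  set f : ℕ → ℝ := fun s => Real.sin (π * p * s / N) * Real.sin (π * q * s / N) with hf
  have h2N : ∑ s ∈ Finset.range (2*N), f s = 0 := by
    have : ∀ s ∈ Finset.range (2*N), f s
        = (Real.cos (π * (((q:ℤ) - p : ℤ) : ℝ) * s / N)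
            - Real.cos (π * (((q:ℤ) + p : ℤ) : ℝ) * s / N)) / 2 := by
      intro s _; exact prod_to_sum N p q s hN0
    rw [Finset.sum_congr rfl this, ← Finset.sum_div, Finset.sum_sub_distrib,
      cos_sum_zero N hN0 _ h1, cos_sum_zero N hN0 _ h2]
    norm_num
  have hsplit : ∑ s ∈ Finset.range (2*N), f s = 2 * ∑ s ∈ Finset.range N, f s := by
    rw [two_mul N, Finset.sum_range_add f N N]
    have heq : ∑ s ∈ Finset.range N, f (N + s) = ∑ s ∈ Finset.range N, f s := by
      refine Finset.sum_congr rfl fun s _ => ?_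
      simp only [hf, Nat.cast_add]
      exact f_shift N p q s hN0 hpodd hqodd
    rw [heq]; ring
  have hrangeN : ∑ s ∈ Finset.range N, f s = 0 := by linarith [hsplit ▸ h2N]
  have hf0 : f 0 = 0 := by simp [hf]
  have : ∑ s ∈ Finset.range N, f s = f 0 + ∑ s ∈ Finset.Ico 1 N, f s := by
    rw [Finset.range_eq_Ico]
    exact Finset.sum_eq_sum_Ico_succ_bot hN0 f
  have hIco : Finset.Ico 1 N = Finset.Icc 1 (N-1) := by
    rw [← Finset.Ico_add_one_right_eq_Icc]
    congr 1
    omega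
  rw [this, hf0, hIco] at hrangeN
  linarith


/-- Let `N ≥ 2` and let `p, q` be coprime positive odd integers, each coprime to
`N`, and set `f s = sin(πps/N)·sin(πqs/N)`. Then `f` takes both a positive value
and a negative value on `{1, …, N-1}` iff neither `q - p` nor `q + p` is
divisible by `2N`. -/
theorem f_s_both_signs_iff (N p q : ℕ) (hN : 2 ≤ N) (hp : 0 < p) (hq : 0 < q)
    (hpq : Nat.Coprime p q) (hpodd : Odd p) (hqodd : Odd q)
    (hpN : Nat.Coprime p N) (hqN : Nat.Coprime q N) :
    ((∃ s ∈ Finset.Icc 1 (N - 1),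
        0 < Real.sin (π * (p : ℝ) * (s : ℝ) / (N : ℝ)) *
            Real.sin (π * (q : ℝ) * (s : ℝ) / (N : ℝ))) ∧
     (∃ s' ∈ Finset.Icc 1 (N - 1),
        Real.sin (π * (p : ℝ) * (s' : ℝ) / (N : ℝ)) *
            Real.sin (π * (q : ℝ) * (s' : ℝ) / (N : ℝ)) < 0)) ↔
    (¬ ((2 * (N : ℤ)) ∣ ((q : ℤ) - (p : ℤ))) ∧
     ¬ ((2 * (N : ℤ)) ∣ ((q : ℤ) + (p : ℤ)))) := by
  have hN0 : 0 < N := by omega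
  have hNr : (N:ℝ) ≠ 0 := by exact_mod_cast hN0.ne'
  constructor
  · rintro ⟨⟨s, hs, hpos⟩, ⟨s', hs', hneg⟩⟩
    constructor
    · rintro ⟨k, hk⟩
      have hq' : (q:ℝ) = (p:ℝ) + 2 * N * k := by
        exact_mod_cast (by linarith : (q:ℤ) = p + 2 * N * k)
      have e : π * (q:ℝ) * s' / N = π * p * s' / N + ((k * s' : ℤ) : ℝ) * (2 * π) := by
        rw [hq']; push_cast; field_simp
      have heq : Real.sin (π * (q:ℝ) * s' / N) = Real.sin (π * (p:ℝ) * s' / N) := by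
        rw [e, Real.sin_add_int_mul_two_pi]
      rw [heq] at hneg
      nlinarith [mul_self_nonneg (Real.sin (π * (p:ℝ) * s' / N))]
    · rintro ⟨k, hk⟩
      have hq' : (q:ℝ) = -(p:ℝ) + 2 * N * k := by
        exact_mod_cast (by linarith : (q:ℤ) = -(p:ℤ) + 2 * N * k)
      have e : π * (q:ℝ) * s / N = -(π * p * s / N) + ((k * s : ℤ) : ℝ) * (2 * π) := by
        rw [hq']; push_cast; field_simp
      have heq : Real.sin (π * (q:ℝ) * s / N) = - Real.sin (π * (p:ℝ) * s / N) := by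
        rw [e, Real.sin_add_int_mul_two_pi, Real.sin_neg]
      rw [heq] at hpos
      nlinarith [mul_self_nonneg (Real.sin (π * (p:ℝ) * s / N))]
  · rintro ⟨h1, h2⟩
    have hz := sum_icc_zero N p q hN hpodd hqodd h1 h2
    have hne : ∀ s ∈ Finset.Icc 1 (N-1),
        Real.sin (π * (p:ℝ) * s / N) * Real.sin (π * (q:ℝ) * s / N) ≠ 0 := by
      intro s hs
      simp only [Finset.mem_Icc] at hs
      exact mul_ne_zero (sin_ne_zero_aux N p s hN0 hpN hs.1 hs.2)
        (sin_ne_zero_aux N q s hN0 hqN hs.1 hs.2)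
    have hnonempty : (Finset.Icc 1 (N-1)).Nonempty := ⟨1, by simp; omega⟩
    constructor
    · by_contra hcon
      push_neg at hcon
      have : ∑ s ∈ Finset.Icc 1 (N-1),
          Real.sin (π * (p:ℝ) * s / N) * Real.sin (π * (q:ℝ) * s / N) < 0 :=
        Finset.sum_neg (fun s hs => lt_of_le_of_ne (hcon s hs) (hne s hs)) hnonempty
      linarith
    · by_contra hcon
      push_neg at hcon
      have : 0 < ∑ s ∈ Finset.Icc 1 (N-1),
          Real.sin (π * (p:ℝ) * s / N) * Real.sin (π * (q:ℝ) * s / N) :=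
        Finset.sum_pos (fun s hs => lt_of_le_of_ne (hcon s hs) (Ne.symm (hne s hs))) hnonempty
      linarith
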